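/- arXiv:2407.09463 — 3 statements merged into one kernel-verified Lean document; each statement's English description precedes it below -/
import Mathlib

section
/- Suppose Alice makes progress in at most N'/2 iterations, Bob's insertions occur only at the first or last iteration of multi-iteration sequences, each such sequence contains exactly two insertions, sequences where Alice inserts last contain exactly one Bob-insertion, and every sequence where Bob inserts at the last iteration has at least one bit flip in that iteration. If f bit flips occur overall, then the total number of iterations with progress is at most N' + 2f. -/
/-- An iteration of the execution, labeled by whether Alice makes progress,
whether Bob inserts, whether Alice inserts, and the number of bit flips
occurring in it. -/
structure IterLabel where
  aliceProgress : Bool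
  bobInserts : Bool
  aliceInserts : Bool
  flips : ℕ

lemma countP_or_le {α : Type*} (p q : α → Bool) (l : List α) :
    l.countP (fun x => p x || q x) ≤ l.countP p + l.countP q := by
  induction l with
  | nil => simp
  | cons a t ih =>
    simp only [List.countP_cons]
    cases hp : p a <;> cases hq : q a <;> simp [hp, hq] <;> omega

lemma countP_le_one {α : Type*} (l : List α) (p : α → Bool)
    (h : ∀ k (hk : k < l.length), p l[k] → k = 0) : l.countP p ≤ 1 := by
  cases l with
  | nil => simp
  | cons a t =>
    have ht : t.countP p = 0 := by
      rw [List.countP_eq_zero]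
      intro x hx hp
      obtain ⟨k, hk, hke⟩ := List.mem_iff_getElem.mp hx
      have := h (k + 1) (by simpa using Nat.succ_lt_succ hk) (by simpa [hke] using hp)
      omega
    rw [List.countP_cons, ht]
    split <;> simp

lemma key (b : List IterLabel)
    (hAP : ∀ x ∈ b, x.aliceInserts → x.aliceProgress)
    (hBobPos : ∀ k, ∀ h : k < b.length,
      (b.get ⟨k, h⟩).bobInserts → 2 ≤ b.length ∧ (k = 0 ∨ k = b.length - 1))
    (hTwo : b.countP (fun x => x.bobInserts || x.aliceInserts) ≠ 0 →
      b.countP (fun x => x.bobInserts || x.aliceInserts) = 2)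
    (hType2 : ∀ hb : b ≠ [], (b.getLast hb).bobInserts → 1 ≤ (b.getLast hb).flips) :
    b.countP (fun x => x.bobInserts) ≤
      b.countP (fun x => x.aliceProgress) + 2 * (b.map (fun x => x.flips)).sum := by
  have hBle : b.countP (fun x => x.bobInserts) ≤
      b.countP (fun x => x.bobInserts || x.aliceInserts) :=
    List.countP_mono_left (by intro x _ hx; simp [hx])
  by_cases hcI : b.countP (fun x => x.bobInserts || x.aliceInserts) = 0
  · omega
  · have hcI2 := hTwo hcI
    have hbne : b ≠ [] := by rintro rfl; simp at hcI
    by_cases hlast : (b.getLast hbne).bobInserts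
    · have hfl := hType2 hbne hlast
      have hmem : b.getLast hbne ∈ b := List.getLast_mem hbne
      have hmm : (b.getLast hbne).flips ∈ b.map (fun x => x.flips) :=
        List.mem_map_of_mem hmem
      have hsum : 1 ≤ (b.map (fun x => x.flips)).sum :=
        le_trans hfl (List.single_le_sum (by simp) _ hmm)
      omega
    · -- last element is not a Bob-insertion, so all Bob's insertions are at index 0
      have hB1 : b.countP (fun x => x.bobInserts) ≤ 1 := by
        conv_lhs => rw [← List.dropLast_append_getLast hbne]
        rw [List.countP_append]
        have h2 : ([b.getLast hbne].countP fun x => x.bobInserts) = 0 := by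
          simp [List.countP_cons, hlast]
        rw [h2, Nat.add_zero]
        apply countP_le_one
        intro k hk hkp
        have hkl : k < b.length := lt_of_lt_of_le hk (@List.length_dropLast _ b ▸ Nat.sub_le _ _)
        have hdl : b.dropLast[k] = b[k] := List.getElem_dropLast hk
        have := hBobPos k hkl (by simpa [hdl] using hkp)
        have hklen : k < b.length - 1 := by
          simpa [List.length_dropLast] using hk
        omega
      rcases Nat.lt_or_ge (b.countP (fun x => x.bobInserts)) 1 with h1 | h1
      · omega
      · have hor := countP_or_le (fun x => x.bobInserts) (fun x => x.aliceInserts) b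
        have hAI : 0 < b.countP (fun x => x.aliceInserts) := by omega
        obtain ⟨x, hx, hxp⟩ := List.countP_pos_iff.mp hAI
        have hP : 0 < b.countP (fun x => x.aliceProgress) :=
          List.countP_pos_iff.mpr ⟨x, hx, hAP x hx hxp⟩
        omega

/-- if Alice makes progress in at most `N'/2` iterations, Bob's
insertions occur only at the first or last iteration of multi-iteration
sequences, each sequence containing an insertion contains exactly two
insertions, sequences where Alice inserts at the last iteration contain
exactly one Bob-insertion, every sequence where Bob inserts at the last
iteration has at least one bit flip in that iteration, and `f` bit flips occur
overall, then the total number of iterations with progress is at most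
`N' + 2f`. -/
theorem stmt15 (N' f : ℕ) (S : List (List IterLabel))
    (hA : 2 * ((S.flatten).countP (fun x => x.aliceProgress)) ≤ N')
    (hAliceInsProg : ∀ x ∈ S.flatten, x.aliceInserts → x.aliceProgress)
    (hProgress : ∀ x ∈ S.flatten, x.aliceInserts || x.bobInserts → x.aliceProgress || x.bobInserts)
    (hBobPos : ∀ b ∈ S, ∀ k, ∀ h : k < b.length,
      (b.get ⟨k, h⟩).bobInserts → 2 ≤ b.length ∧ (k = 0 ∨ k = b.length - 1))
    (hTwo : ∀ b ∈ S, b.countP (fun x => x.bobInserts || x.aliceInserts) ≠ 0 →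
      b.countP (fun x => x.bobInserts || x.aliceInserts) = 2)
    (hType1 : ∀ b ∈ S, ∀ hb : b ≠ [], (b.getLast hb).aliceInserts →
      b.countP (fun x => x.bobInserts) = 1)
    (hType2 : ∀ b ∈ S, ∀ hb : b ≠ [], (b.getLast hb).bobInserts →
      1 ≤ (b.getLast hb).flips)
    (hf : ((S.flatten).map (fun x => x.flips)).sum = f) :
    (S.flatten).countP (fun x => x.aliceProgress || x.bobInserts) ≤ N' + 2 * f := by
  have hcore : ∀ T : List (List IterLabel),
      (∀ b ∈ T, ∀ x ∈ b, x.aliceInserts → x.aliceProgress) →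
      (∀ b ∈ T, ∀ k, ∀ h : k < b.length,
        (b.get ⟨k, h⟩).bobInserts → 2 ≤ b.length ∧ (k = 0 ∨ k = b.length - 1)) →
      (∀ b ∈ T, b.countP (fun x => x.bobInserts || x.aliceInserts) ≠ 0 →
        b.countP (fun x => x.bobInserts || x.aliceInserts) = 2) →
      (∀ b ∈ T, ∀ hb : b ≠ [], (b.getLast hb).bobInserts → 1 ≤ (b.getLast hb).flips) →
      (T.flatten).countP (fun x => x.bobInserts) ≤
        (T.flatten).countP (fun x => x.aliceProgress) +
          2 * ((T.flatten).map (fun x => x.flips)).sum := by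
    intro T
    induction T with
    | nil => simp
    | cons b T ih =>
      intro h1 h2 h3 h4
      have hb := key b (h1 b (by simp)) (h2 b (by simp)) (h3 b (by simp)) (h4 b (by simp))
      have hT := ih (fun c hc => h1 c (by simp [hc])) (fun c hc => h2 c (by simp [hc]))
        (fun c hc => h3 c (by simp [hc])) (fun c hc => h4 c (by simp [hc]))
      simp only [List.flatten_cons, List.countP_append, List.map_append, List.sum_append]
      omega
  have hB := hcore S
    (fun b hb x hx => hAliceInsProg x (List.mem_flatten.mpr ⟨b, hb, hx⟩))
    hBobPos hTwo hType2
  have hor := countP_or_le (fun x => x.aliceProgress) (fun x => x.bobInserts) S.flatten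
  omega
end

section
/- Let |Π| and N' be positive integers with N' ≤ |Π|, let C ∈ (0,1), and set p_i = min{C·N'/i², 1/2}, k_i = ⌈log₂(1/p_i)⌉ + 1. Then ∑_{i=1}^{|Π|} 3·k_i ≤ 6·|Π| + 3·√(2·C·N') + 3·|Π|·log₂(|Π|² / (C·N')). -/
theorem stmt17 (P N' : ℕ) (hP : 0 < P) (hN' : 0 < N') (hle : N' ≤ P)
    (C : ℝ) (hC : C ∈ Set.Ioo (0 : ℝ) 1)
    (p : ℕ → ℝ) (hp : ∀ i : ℕ, p i = min (C * (N' : ℝ) / (i : ℝ) ^ 2) (1 / 2))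
    (k : ℕ → ℤ) (hk : ∀ i : ℕ, k i = ⌈Real.logb 2 (1 / p i)⌉ + 1) :
    (∑ i ∈ Finset.Icc 1 P, 3 * ((k i : ℝ))) ≤
      6 * (P : ℝ) + 3 * Real.sqrt (2 * C * (N' : ℝ)) +
        3 * (P : ℝ) * Real.logb 2 ((P : ℝ) ^ 2 / (C * (N' : ℝ))) := by
  obtain ⟨hC0, hC1⟩ := hC
  have hN'pos : (0:ℝ) < (N':ℝ) := by exact_mod_cast hN'
  have hPpos : (0:ℝ) < (P:ℝ) := by exact_mod_cast hP
  have hNP : (N':ℝ) ≤ (P:ℝ) := by exact_mod_cast hle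
  have hCN : 0 < C * (N':ℝ) := by positivity
  set L := Real.logb 2 ((P:ℝ)^2 / (C * (N':ℝ))) with hLdef
  have hL0 : 0 ≤ L := by
    apply Real.logb_nonneg one_lt_two
    rw [le_div_iff₀ hCN]
    have hP1 : (1:ℝ) ≤ (P:ℝ) := by exact_mod_cast hP
    nlinarith [mul_lt_mul_of_pos_right hC1 hN'pos]
  have key : ∀ i ∈ Finset.Icc 1 P, 3 * ((k i : ℝ)) ≤
      6 + 3 * ((if (i:ℝ)^2 ≤ 2*C*(N':ℝ) then (1:ℝ) else 0) + L) := by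
    intro i hi
    simp only [Finset.mem_Icc] at hi
    have hi1 : (1:ℝ) ≤ (i:ℝ) := by exact_mod_cast hi.1
    have hiP : (i:ℝ) ≤ (P:ℝ) := by exact_mod_cast hi.2
    have hi2 : (0:ℝ) < (i:ℝ)^2 := by positivity
    have hkc : ((k i : ℝ)) ≤ Real.logb 2 (1 / p i) + 2 := by
      rw [hk i]; push_cast
      have := Int.ceil_lt_add_one (Real.logb 2 (1 / p i))
      linarith
    by_cases h : (i:ℝ)^2 ≤ 2*C*(N':ℝ)
    · have hpi : p i = 1/2 := by
        rw [hp i]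
        apply min_eq_right
        rw [le_div_iff₀ hi2]; linarith
      rw [hpi] at hkc
      norm_num at hkc
      simp only [h, if_true]
      linarith
    · have hlt : C * (N':ℝ) / (i:ℝ)^2 < 1/2 := by
        rw [div_lt_iff₀ hi2]; push_neg at h; linarith
      have hpi : p i = C * (N':ℝ) / (i:ℝ)^2 := by
        rw [hp i]; exact min_eq_left hlt.le
      have h1p : 1 / p i = (i:ℝ)^2 / (C * (N':ℝ)) := by
        rw [hpi, one_div_div]
      have hmono : Real.logb 2 (1 / p i) ≤ L := by
        rw [h1p, hLdef]
        gcongr <;> nlinarith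
      simp only [h, if_false]
      linarith
  calc (∑ i ∈ Finset.Icc 1 P, 3 * ((k i : ℝ)))
      ≤ ∑ i ∈ Finset.Icc 1 P,
          (6 + 3 * ((if (i:ℝ)^2 ≤ 2*C*(N':ℝ) then (1:ℝ) else 0) + L)) :=
        Finset.sum_le_sum key
    _ ≤ 6 * (P:ℝ) + 3 * Real.sqrt (2 * C * (N':ℝ)) + 3 * (P:ℝ) * L := by
        have hcard : (((Finset.Icc 1 P).filter
            (fun i : ℕ => (i:ℝ)^2 ≤ 2*C*(N':ℝ))).card : ℝ) ≤ Real.sqrt (2*C*(N':ℝ)) := by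
          have hsub : (Finset.Icc 1 P).filter (fun i : ℕ => (i:ℝ)^2 ≤ 2*C*(N':ℝ)) ⊆
              Finset.Icc 1 ⌊Real.sqrt (2*C*(N':ℝ))⌋₊ := by
            intro i hi
            simp only [Finset.mem_filter, Finset.mem_Icc] at hi ⊢
            refine ⟨hi.1.1, Nat.le_floor ?_⟩
            have := hi.2
            have h0 : (0:ℝ) ≤ (i:ℝ) := by positivity
            nlinarith [Real.sq_sqrt (by positivity : (0:ℝ) ≤ 2*C*(N':ℝ)),
              Real.sqrt_nonneg (2*C*(N':ℝ))]
          calc (((Finset.Icc 1 P).filter (fun i : ℕ => (i:ℝ)^2 ≤ 2*C*(N':ℝ))).card : ℝ)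
              ≤ ((Finset.Icc 1 ⌊Real.sqrt (2*C*(N':ℝ))⌋₊).card : ℝ) := by
                exact_mod_cast Finset.card_le_card hsub
            _ ≤ Real.sqrt (2*C*(N':ℝ)) := by
                rw [Nat.card_Icc]
                simp only [Nat.add_sub_cancel]
                exact_mod_cast Nat.floor_le (Real.sqrt_nonneg _)
        rw [Finset.sum_add_distrib, Finset.sum_const, Nat.card_Icc,
          ← Finset.mul_sum, Finset.sum_add_distrib, Finset.sum_const,
          Finset.sum_boole]
        simp only [Nat.add_sub_cancel, nsmul_eq_mul, smul_eq_mul]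
        have hcardIcc : ((Finset.Icc 1 P).card : ℝ) = P := by
          rw [Nat.card_Icc]; push_cast; ring
        rw [hcardIcc]
        push_cast
        nlinarith
end

section
/- Consider a binary code of length 5 where 0 is encoded uniformly at random as one of {00000, 10000, 01000} and 1 uniformly as one of {00100, 10010, 01001}; decoding maps a word to 0 or 1 if it lies in the respective set and to ⊥ (erasure) otherwise. Then for every nonzero error pattern Δ ∈ {0,1}^5 and every input bit b, the probability (over the uniform choice of codeword for b) that the received word (codeword XOR Δ) decodes to a valid codeword (i.e., not ⊥) is at most 2/3; equivalently, the decoded result is ⊥ with probability at least 1/3. -/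
/-- The three codewords of the bit `b` in the random length-5 code:
`0 ↦ {00000, 10000, 01000}` and `1 ↦ {00100, 10010, 01001}`. -/
def enc5 (b : Bool) : Finset (Fin 5 → Bool) :=
  if b then
    {![false, false, true, false, false],
     ![true, false, false, true, false],
     ![false, true, false, false, true]}
  else
    {![false, false, false, false, false],
     ![true, false, false, false, false],
     ![false, true, false, false, false]}

/-- Decoding: a word decodes to `b` if it is one of the codewords of `b`,
and to an erasure (`none`) otherwise. -/
def dec5 (w : Fin 5 → Bool) : Option Bool :=
  if w ∈ enc5 false then some false
  else if w ∈ enc5 true then some true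
  else none

lemma key_s18 : ∀ Δ : Fin 5 → Bool, Δ ≠ (fun _ => false) → ∀ b : Bool,
    ((enc5 b).filter (fun c => dec5 (fun i => xor (c i) (Δ i)) ≠ none)).card ≤ 2 ∧
    1 ≤ ((enc5 b).filter (fun c => dec5 (fun i => xor (c i) (Δ i)) = none)).card := by
  decide

/-- for every nonzero error pattern `Δ` and every input bit `b`,
the probability over the uniform choice of one of the three codewords of `b`
that the received word (codeword XOR `Δ`) decodes to a valid codeword is at
most `2/3`; equivalently, it decodes to an erasure with probability at least
`1/3`. -/
theorem stmt18 (Δ : Fin 5 → Bool) (hΔ : Δ ≠ fun _ => false) (b : Bool) :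
    (((enc5 b).filter (fun c => dec5 (fun i => xor (c i) (Δ i)) ≠ none)).card : ℝ) / 3 ≤
        2 / 3 ∧
      (1 : ℝ) / 3 ≤
        (((enc5 b).filter (fun c => dec5 (fun i => xor (c i) (Δ i)) = none)).card : ℝ) / 3 := by
  obtain ⟨h1, h2⟩ := key_s18 Δ hΔ b
  constructor
  · apply div_le_div_of_nonneg_right _ (by norm_num)
    exact_mod_cast h1
  · apply div_le_div_of_nonneg_right _ (by norm_num)
    exact_mod_cast h2
end
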